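/- Let u : B → ℝ be a continuous function on the open unit ball B ⊆ ℝⁿ. If the sets {x ∈ B : u(x) > 0} and {x ∈ B : u(x) < 0} are both nonempty, then the zero set {x ∈ B : u(x) = 0} has positive (n−1)-dimensional Hausdorff measure; in particular its Hausdorff dimension is at least n−1. -/

import Mathlib

open MeasureTheory Metric

/-- If a continuous function on the open unit ball of ℝⁿ takes both positive
and negative values, then its zero set has positive (n−1)-dimensional Hausdorff measure,
and in particular Hausdorff dimension at least n−1. -/
theorem stmt0 (n : ℕ) (u : EuclideanSpace ℝ (Fin n) → ℝ)
    (hu : ContinuousOn u (ball (0 : EuclideanSpace ℝ (Fin n)) 1))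
    (hpos : ∃ x ∈ ball (0 : EuclideanSpace ℝ (Fin n)) 1, 0 < u x)
    (hneg : ∃ x ∈ ball (0 : EuclideanSpace ℝ (Fin n)) 1, u x < 0) :
    0 < μH[(n : ℝ) - 1] {x | x ∈ ball (0 : EuclideanSpace ℝ (Fin n)) 1 ∧ u x = 0} ∧
      ENNReal.ofReal ((n : ℝ) - 1) ≤
        dimH {x | x ∈ ball (0 : EuclideanSpace ℝ (Fin n)) 1 ∧ u x = 0} := by
  obtain ⟨a, ha, hua⟩ := hpos
  obtain ⟨b, hb, hub⟩ := hneg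
  cases n with
  | zero =>
    exfalso
    have : a = b := Subsingleton.elim a b
    rw [this] at hua; linarith
  | succ m =>
    set Z : Set (EuclideanSpace ℝ (Fin (m + 1))) :=
      {x | x ∈ ball (0 : EuclideanSpace ℝ (Fin (m + 1))) 1 ∧ u x = 0} with hZdef
    have hab : b - a ≠ 0 := sub_ne_zero.mpr (by intro h; rw [h] at hub; linarith)
    haveI : Fact (Module.finrank ℝ (EuclideanSpace ℝ (Fin (m + 1))) = m + 1) :=
      ⟨finrank_euclideanSpace_fin⟩
    let W : Submodule ℝ (EuclideanSpace ℝ (Fin (m + 1))) := (ℝ ∙ (b - a))ᗮ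
    have hW : Module.finrank ℝ W = m := Submodule.finrank_orthogonal_span_singleton hab
    set k := Module.finrank ℝ ↥W with hk
    let ψ : W ≃ₗᵢ[ℝ] EuclideanSpace ℝ (Fin k) := (stdOrthonormalBasis ℝ W).repr
    let P : EuclideanSpace ℝ (Fin (m + 1)) →L[ℝ] W := W.orthogonalProjectionOnto
    let φ : EuclideanSpace ℝ (Fin (m + 1)) → EuclideanSpace ℝ (Fin k) :=
      fun x => ψ (P (x - a))
    -- φ is 1-Lipschitz
    have hφ : LipschitzWith 1 φ := by
      apply LipschitzWith.of_dist_le_mul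
      intro x y
      have h1 : dist (φ x) (φ y) = ‖(P (x - y) : W)‖ := by
        rw [show φ x = ψ (P (x - a)) from rfl, show φ y = ψ (P (y - a)) from rfl,
          ψ.isometry.dist_eq, dist_eq_norm, ← map_sub, sub_sub_sub_cancel_right]
      rw [h1, dist_eq_norm]
      simp only [NNReal.coe_one, one_mul]
      calc ‖(P (x - y) : W)‖ ≤ ‖P‖ * ‖x - y‖ := P.le_opNorm _
        _ ≤ 1 * ‖x - y‖ := by
            have := Submodule.orthogonalProjectionOnto_norm_le W
            gcongr
        _ = ‖x - y‖ := one_mul _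
    -- continuity neighborhoods
    have hca : ContinuousAt u a := hu.continuousAt (isOpen_ball.mem_nhds ha)
    have hcb : ContinuousAt u b := hu.continuousAt (isOpen_ball.mem_nhds hb)
    obtain ⟨δ₁, hδ₁, hδ₁'⟩ := Metric.mem_nhds_iff.mp
      (hca.preimage_mem_nhds (isOpen_Ioi.mem_nhds hua))
    obtain ⟨δ₂, hδ₂, hδ₂'⟩ := Metric.mem_nhds_iff.mp
      (hcb.preimage_mem_nhds (isOpen_Iio.mem_nhds hub))
    have hna : ‖a‖ < 1 := mem_ball_zero_iff.mp ha
    have hnb : ‖b‖ < 1 := mem_ball_zero_iff.mp hb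
    set ε : ℝ := min (min δ₁ δ₂) (min (1 - ‖a‖) (1 - ‖b‖)) with hε
    have hεpos : 0 < ε :=
      lt_min (lt_min hδ₁ hδ₂) (lt_min (by linarith) (by linarith))
    -- key: ball ⊆ φ '' Z
    have himg : ball (0 : EuclideanSpace ℝ (Fin k)) ε ⊆ φ '' Z := by
      intro v hv
      rw [mem_ball_zero_iff] at hv
      set w : EuclideanSpace ℝ (Fin (m + 1)) := ((ψ.symm v : W) : EuclideanSpace ℝ (Fin (m + 1)))
        with hwdef
      have hwnorm : ‖w‖ = ‖v‖ := by
        rw [hwdef, Submodule.norm_coe, ψ.symm.norm_map]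
      have hwε : ‖w‖ < ε := by rw [hwnorm]; exact hv
      have haw : a + w ∈ ball (0 : EuclideanSpace ℝ (Fin (m + 1))) 1 := by
        rw [mem_ball_zero_iff]
        have h2 : ε ≤ 1 - ‖a‖ := le_trans (min_le_right _ _) (min_le_left _ _)
        calc ‖a + w‖ ≤ ‖a‖ + ‖w‖ := norm_add_le _ _
          _ < 1 := by linarith
      have hbw : b + w ∈ ball (0 : EuclideanSpace ℝ (Fin (m + 1))) 1 := by
        rw [mem_ball_zero_iff]
        have h2 : ε ≤ 1 - ‖b‖ := le_trans (min_le_right _ _) (min_le_right _ _)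
        calc ‖b + w‖ ≤ ‖b‖ + ‖w‖ := norm_add_le _ _
          _ < 1 := by linarith
      have huaw : 0 < u (a + w) := by
        refine hδ₁' ?_
        rw [mem_ball, dist_eq_norm, add_sub_cancel_left]
        exact lt_of_lt_of_le hwε (le_trans (min_le_left _ _) (min_le_left _ _))
      have hubw : u (b + w) < 0 := by
        refine hδ₂' ?_
        rw [mem_ball, dist_eq_norm, add_sub_cancel_left]
        exact lt_of_lt_of_le hwε (le_trans (min_le_left _ _) (min_le_right _ _))
      -- the segment
      set γ : ℝ → EuclideanSpace ℝ (Fin (m + 1)) := fun t => a + w + t • (b - a) with hγ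
      have hγmem : ∀ t ∈ Set.Icc (0:ℝ) 1, γ t ∈ ball (0 : EuclideanSpace ℝ (Fin (m + 1))) 1 := by
        intro t ht
        have hcvx := convex_ball (0 : EuclideanSpace ℝ (Fin (m + 1))) 1
        have := hcvx haw hbw (by linarith [ht.2] : (0:ℝ) ≤ 1 - t) ht.1 (by ring)
        convert this using 1
        rw [hγ]
        simp only
        module
      have hγcont : ContinuousOn (fun t => u (γ t)) (Set.Icc (0:ℝ) 1) :=
        ContinuousOn.comp hu (by fun_prop : Continuous γ).continuousOn hγmem
      have hγ0 : 0 < u (γ 0) := by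
        have : γ 0 = a + w := by rw [hγ]; simp only; module
        rw [this]; exact huaw
      have hγ1 : u (γ 1) < 0 := by
        have : γ 1 = b + w := by rw [hγ]; simp only; module
        rw [this]; exact hubw
      obtain ⟨t, ht, hut⟩ := intermediate_value_Icc' (by norm_num : (0:ℝ) ≤ 1) hγcont
        (Set.mem_Icc.mpr ⟨le_of_lt hγ1, le_of_lt hγ0⟩)
      refine ⟨γ t, ⟨hγmem t ht, hut⟩, ?_⟩
      -- φ (γ t) = v
      have hsub : γ t - a = w + t • (b - a) := by rw [hγ]; simp only; module
      have hPw : P w = ψ.symm v := Submodule.orthogonalProjectionOnto_mem_subspace_eq_self _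
      have hPba : P (b - a) = 0 := by
        apply Submodule.orthogonalProjectionOnto_apply_of_mem_orthogonal
        exact Submodule.le_orthogonal_orthogonal _ (Submodule.mem_span_singleton_self _)
      show ψ (P (γ t - a)) = v
      rw [hsub, map_add, _root_.map_smul, hPw, hPba, smul_zero, add_zero,
        LinearIsometryEquiv.apply_symm_apply]
    -- positive measure of the small ball
    have hball : 0 < μH[(k:ℝ)] (ball (0 : EuclideanSpace ℝ (Fin k)) ε) := by
      have hlip : LipschitzWith 1 ⇑(EuclideanSpace.equiv (Fin k) ℝ) :=
        PiLp.lipschitzWith_ofLp 2 _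
      have h1 : μH[(k:ℝ)] (⇑(EuclideanSpace.equiv (Fin k) ℝ) '' ball 0 ε)
          ≤ μH[(k:ℝ)] (ball (0 : EuclideanSpace ℝ (Fin k)) ε) := by
        simpa using hlip.hausdorffMeasure_image_le (Nat.cast_nonneg k) (ball 0 ε)
      have hvol : (μH[(k:ℝ)] : Measure (Fin k → ℝ)) = volume := by
        have := hausdorffMeasure_pi_real (ι := Fin k)
        rwa [Fintype.card_fin] at this
      have h2 : 0 < μH[(k:ℝ)] (⇑(EuclideanSpace.equiv (Fin k) ℝ) '' ball 0 ε) := by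
        rw [hvol]
        apply IsOpen.measure_pos
        · exact (EuclideanSpace.equiv (Fin k) ℝ).toHomeomorph.isOpenMap _ isOpen_ball
        · exact (nonempty_ball.mpr hεpos).image _
      exact lt_of_lt_of_le h2 h1
    -- transfer
    have hZ : 0 < μH[(k:ℝ)] Z := by
      have h1 : μH[(k:ℝ)] (ball (0 : EuclideanSpace ℝ (Fin k)) ε) ≤ μH[(k:ℝ)] (φ '' Z) :=
        measure_mono himg
      have h2 : μH[(k:ℝ)] (φ '' Z) ≤ μH[(k:ℝ)] Z := by
        simpa using hφ.hausdorffMeasure_image_le (Nat.cast_nonneg k) Z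
      exact lt_of_lt_of_le hball (le_trans h1 h2)
    have hexp : ((m + 1 : ℕ) : ℝ) - 1 = (k : ℝ) := by
      rw [hW]; push_cast; ring
    constructor
    · rw [hexp]; exact hZ
    · rw [hexp, ENNReal.ofReal_natCast]
      have h3 : ((k : NNReal) : ENNReal) ≤ dimH Z := by
        apply le_dimH_of_hausdorffMeasure_ne_zero (d := (k : NNReal))
        rw [show ((k : NNReal) : ℝ) = (k : ℝ) by push_cast; rfl]
        exact hZ.ne'
      simpa using h3
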